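/- Fix 1 ≤ p ≤ ∞ and k ∈ ℕ. In ℝ^{2^k} with the ℓ_p norm, let e₁, …, e_{2^k} be the standard basis vectors and let w₁, …, w_{2^k} be the rows of the 2^k × 2^k Walsh matrix, and set A = {0} ∪ {wᵢ} ∪ {eᵢ}, a set of n = 2·2^k + 1 points. Then for every Hilbert space H, every L ≥ 1, and every linear map T : ℝ^{2^k} → H satisfying ‖u − v‖_p ≤ ‖T(u) − T(v)‖ ≤ L·‖u − v‖_p for all u, v ∈ A, one has L ≥ 2^{k·|1/p − 1/2|} = ((n−1)/2)^{|1/p − 1/2|}. -/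

import Mathlib

open scoped ENNReal

/-- The `2^k × 2^k` Walsh matrix, with rows and columns indexed by `Fin k → Bool`
(i.e. `𝔽₂^k`): its `(u, v)` entry is `(-1)^⟨u,v⟩` where `⟨u,v⟩ = #{i : uᵢ = vᵢ = 1}`.
This is the `k`-fold Kronecker power of `[[1,1],[1,-1]]`. -/
noncomputable def walshRow (k : ℕ) (u : Fin k → Bool) : (Fin k → Bool) → ℝ :=
  fun v => (-1 : ℝ) ^ (Finset.univ.filter fun i => u i && v i).card

lemma walshRow_eq_prod (k : ℕ) (u v : Fin k → Bool) :
    walshRow k u v = ∏ i, (if u i && v i then (-1:ℝ) else 1) := by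
  rw [walshRow, Finset.prod_ite, Finset.prod_const, Finset.prod_const_one, mul_one]

lemma walsh_orth (k : ℕ) (v v' : Fin k → Bool) :
    ∑ u : Fin k → Bool, walshRow k u v * walshRow k u v'
      = if v = v' then (2:ℝ)^k else 0 := by
  have h : ∀ u : Fin k → Bool, walshRow k u v * walshRow k u v'
      = ∏ i, ((if u i && v i then (-1:ℝ) else 1) * (if u i && v' i then (-1:ℝ) else 1)) := by
    intro u
    rw [walshRow_eq_prod, walshRow_eq_prod, Finset.prod_mul_distrib]
  simp only [h]
  rw [← Fintype.piFinset_univ, Finset.sum_prod_piFinset Finset.univ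
    (fun i c => (if c && v i then (-1:ℝ) else 1) * (if c && v' i then (-1:ℝ) else 1))]
  have h2 : ∀ i : Fin k, (∑ b : Bool, ((if b && v i then (-1:ℝ) else 1) * (if b && v' i then (-1:ℝ) else 1))) = if v i = v' i then 2 else 0 := by
    intro i
    cases hv : v i <;> cases hv' : v' i <;> simp [Fintype.sum_bool] <;> norm_num
  simp only [h2]
  by_cases hvv : v = v'
  · subst hvv; simp
  · rw [if_neg hvv]
    obtain ⟨i, hi⟩ := Function.ne_iff.mp hvv
    exact Finset.prod_eq_zero (Finset.mem_univ i) (by rw [if_neg hi])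

lemma walsh_parseval {H : Type} [NormedAddCommGroup H] [InnerProductSpace ℝ H]
    (k : ℕ) (x : (Fin k → Bool) → H) :
    ∑ u : Fin k → Bool, ‖∑ v : Fin k → Bool, walshRow k u v • x v‖^2
      = (2:ℝ)^k * ∑ v : Fin k → Bool, ‖x v‖^2 := by
  have h : ∀ y : H, ‖y‖^2 = inner ℝ y y := fun y => (real_inner_self_eq_norm_sq y).symm
  simp only [h]
  simp only [sum_inner, inner_sum, real_inner_smul_left, real_inner_smul_right]
  rw [Finset.sum_comm]
  rw [Finset.mul_sum]
  refine Finset.sum_congr rfl fun v _ => ?_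
  have : ∀ u : Fin k → Bool,
      (∑ v' : Fin k → Bool, walshRow k u v * (walshRow k u v' * inner ℝ (x v') (x v)))
        = ∑ v' : Fin k → Bool, (walshRow k u v * walshRow k u v') * inner ℝ (x v') (x v) := by
    intro u; refine Finset.sum_congr rfl fun v' _ => by ring
  simp only [this]
  rw [Finset.sum_comm]
  have : ∀ v' : Fin k → Bool,
      (∑ u : Fin k → Bool, (walshRow k u v * walshRow k u v') * inner ℝ (x v') (x v))
        = (if v = v' then (2:ℝ)^k else 0) * inner ℝ (x v') (x v) := by
    intro v'; rw [← Finset.sum_mul, walsh_orth]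
  simp only [this, ite_mul, zero_mul]
  rw [Finset.sum_ite_eq]
  simp

lemma norm_walshRow_entry (k : ℕ) (u v : Fin k → Bool) : ‖walshRow k u v‖ = 1 := by
  rw [walshRow, norm_pow, norm_neg, norm_one, one_pow]

lemma norm_walsh (p : ℝ≥0∞) [Fact (1 ≤ p)] (k : ℕ) (u : Fin k → Bool) :
    ‖(WithLp.equiv p ((Fin k → Bool) → ℝ)).symm (walshRow k u)‖
      = ((2:ℝ)^k) ^ (1 / p.toReal) := by
  by_cases hp : p = ∞
  · subst hp
    rw [PiLp.norm_eq_ciSup]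
    simp only [WithLp.equiv_symm_apply, PiLp.toLp_apply, norm_walshRow_entry]
    rw [ciSup_const]
    simp
  · have hr : 0 < p.toReal := ENNReal.toReal_pos
      (lt_of_lt_of_le zero_lt_one (Fact.out : 1 ≤ p)).ne' hp
    rw [PiLp.norm_eq_sum hr]
    simp only [WithLp.equiv_symm_apply, PiLp.toLp_apply, norm_walshRow_entry, Real.one_rpow]
    rw [Finset.sum_const, Finset.card_univ, nsmul_eq_mul, mul_one]
    congr 1
    simp

/-- The point set `A = {0} ∪ {wᵢ} ∪ {eᵢ} ⊆ ℝ^{2^k}` consisting of the origin, the rows of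
the Walsh matrix, and the standard basis vectors, viewed inside `ℓ_p^{2^k}`. -/
noncomputable def walshPointSet (p : ℝ≥0∞) (k : ℕ) :
    Set (PiLp p fun _ : Fin k → Bool => ℝ) :=
  {0} ∪ Set.range (fun u => (WithLp.equiv p _).symm (walshRow k u)) ∪
    Set.range (fun u : Fin k → Bool => (WithLp.equiv p _).symm (Pi.single u 1))

/-- Fix `1 ≤ p ≤ ∞` and `k`.  Any linear map `T` from `ℓ_p^{2^k}` into a
Hilbert space `H` which is non-contracting and `L`-Lipschitz on the `n = 2·2^k + 1` point
set `A = {0} ∪ {walsh rows} ∪ {standard basis}` satisfies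
`L ≥ 2^{k |1/p - 1/2|} = ((n-1)/2)^{|1/p - 1/2|}` (for `p = ∞`, `1/p := 0`). -/
theorem stmt_5 (p : ℝ≥0∞) [Fact (1 ≤ p)] (k : ℕ)
    (H : Type) [NormedAddCommGroup H] [InnerProductSpace ℝ H] [CompleteSpace H]
    (L : ℝ) (hL : 1 ≤ L)
    (T : PiLp p (fun _ : Fin k → Bool => ℝ) →ₗ[ℝ] H)
    (hT : ∀ u ∈ walshPointSet p k, ∀ v ∈ walshPointSet p k,
      ‖u - v‖ ≤ ‖T u - T v‖ ∧ ‖T u - T v‖ ≤ L * ‖u - v‖) :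
    ((2 : ℝ) ^ k) ^ |1 / p.toReal - 1 / 2| ≤ L := by
  classical
  set e : (Fin k → Bool) → PiLp p (fun _ : Fin k → Bool => ℝ) :=
    fun v => (WithLp.equiv p _).symm (Pi.single v 1) with he_def
  set w : (Fin k → Bool) → PiLp p (fun _ : Fin k → Bool => ℝ) :=
    fun u => (WithLp.equiv p _).symm (walshRow k u) with hw_def
  have hmem0 : (0 : PiLp p (fun _ : Fin k → Bool => ℝ)) ∈ walshPointSet p k :=
    Or.inl (Or.inl rfl)
  have hmemw : ∀ u : Fin k → Bool, w u ∈ walshPointSet p k := fun u => Or.inl (Or.inr ⟨u, rfl⟩)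
  have hmeme : ∀ v : Fin k → Bool, e v ∈ walshPointSet p k := fun v => Or.inr ⟨v, rfl⟩
  set N : ℝ := (2:ℝ)^k with hN_def
  have hN : (0:ℝ) < N := by positivity
  set a : ℝ := 1 / p.toReal with ha_def
  have ha : 0 ≤ a := by positivity
  set c : ℝ := N ^ a with hc_def
  have hc : 0 < c := Real.rpow_pos_of_pos hN a
  have hL0 : (0:ℝ) < L := lt_of_lt_of_le zero_lt_one hL
  -- norms
  have hne : ∀ v : Fin k → Bool, ‖e v‖ = 1 := fun v => by
    simp [he_def]
  have hnw : ∀ u : Fin k → Bool, ‖w u‖ = c := fun u => norm_walsh p k u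
  -- distance conditions
  have hTe : ∀ v : Fin k → Bool, 1 ≤ ‖T (e v)‖ ∧ ‖T (e v)‖ ≤ L := by
    intro v
    have h := hT (e v) (hmeme v) 0 hmem0
    rw [sub_zero, map_zero, sub_zero, hne v, mul_one] at h
    exact h
  have hTw : ∀ u : Fin k → Bool, c ≤ ‖T (w u)‖ ∧ ‖T (w u)‖ ≤ L * c := by
    intro u
    have h := hT (w u) (hmemw u) 0 hmem0
    rw [sub_zero, map_zero, sub_zero, hnw u] at h
    exact h
  -- decomposition of walsh rows
  have hw_sum : ∀ u : Fin k → Bool, T (w u) = ∑ v : Fin k → Bool, walshRow k u v • T (e v) := by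
    intro u
    have hrep : walshRow k u
        = ∑ v : Fin k → Bool, walshRow k u v • (Pi.single v 1 : (Fin k → Bool) → ℝ) := by
      funext j
      rw [Finset.sum_apply]
      simp [Pi.single_apply]
    have h1 : w u = ∑ v : Fin k → Bool, walshRow k u v • e v := by
      show (WithLp.linearEquiv p ℝ ((Fin k → Bool) → ℝ)).symm (walshRow k u)
          = ∑ v : Fin k → Bool, walshRow k u v •
              (WithLp.linearEquiv p ℝ ((Fin k → Bool) → ℝ)).symm (Pi.single v 1)
      conv_lhs => rw [hrep]
      rw [map_sum]
      simp
    rw [h1, map_sum]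
    simp only [map_smul]
  -- Parseval
  have hpar : ∑ u : Fin k → Bool, ‖T (w u)‖^2 = N * ∑ v : Fin k → Bool, ‖T (e v)‖^2 := by
    simp only [hw_sum]
    rw [walsh_parseval k (fun v => T (e v))]
  have hcard : ((Finset.univ : Finset (Fin k → Bool)).card : ℝ) = N := by
    simp [hN_def]
  -- bounds
  have hlow : N * c^2 ≤ ∑ u : Fin k → Bool, ‖T (w u)‖^2 := by
    calc N * c^2 = ∑ _u : Fin k → Bool, c^2 := by
          rw [Finset.sum_const, nsmul_eq_mul, hcard]
      _ ≤ ∑ u : Fin k → Bool, ‖T (w u)‖^2 :=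
          Finset.sum_le_sum fun u _ => pow_le_pow_left₀ hc.le (hTw u).1 2
  have hhigh : ∑ u : Fin k → Bool, ‖T (w u)‖^2 ≤ N * (L*c)^2 := by
    calc ∑ u : Fin k → Bool, ‖T (w u)‖^2 ≤ ∑ _u : Fin k → Bool, (L*c)^2 :=
          Finset.sum_le_sum fun u _ => pow_le_pow_left₀ (norm_nonneg _) (hTw u).2 2
      _ = N * (L*c)^2 := by rw [Finset.sum_const, nsmul_eq_mul, hcard]
  have helow : N ≤ ∑ v : Fin k → Bool, ‖T (e v)‖^2 := by
    calc N = ∑ _v : Fin k → Bool, (1:ℝ) := by rw [Finset.sum_const, nsmul_eq_mul, hcard, mul_one]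
      _ ≤ ∑ v : Fin k → Bool, ‖T (e v)‖^2 :=
          Finset.sum_le_sum fun v _ => by
            have := (hTe v).1; nlinarith
  have hehigh : ∑ v : Fin k → Bool, ‖T (e v)‖^2 ≤ N * L^2 := by
    calc ∑ v : Fin k → Bool, ‖T (e v)‖^2 ≤ ∑ _v : Fin k → Bool, L^2 :=
          Finset.sum_le_sum fun v _ => pow_le_pow_left₀ (norm_nonneg _) (hTe v).2 2
      _ = N * L^2 := by rw [Finset.sum_const, nsmul_eq_mul, hcard]
  have hc2 : c^2 = N ^ (2*a) := by
    rw [hc_def, ← Real.rpow_natCast (N ^ a) 2, ← Real.rpow_mul hN.le]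
    norm_num [mul_comm]
  rcases le_or_gt (1/2 : ℝ) a with hcase | hcase
  · -- p ≤ 2 case
    rw [abs_of_nonneg (by linarith : (0:ℝ) ≤ 1/p.toReal - 1/2)]
    have key : N ^ (2*a) ≤ N * L^2 := by
      have h1 : N * c^2 ≤ N * (N * L^2) := by
        calc N * c^2 ≤ ∑ u : Fin k → Bool, ‖T (w u)‖^2 := hlow
          _ = N * ∑ v : Fin k → Bool, ‖T (e v)‖^2 := hpar
          _ ≤ N * (N * L^2) := mul_le_mul_of_nonneg_left hehigh hN.le
      have h3 := le_of_mul_le_mul_left h1 hN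
      rwa [hc2] at h3
    rw [← pow_le_pow_iff_left₀ (Real.rpow_nonneg hN.le _) hL0.le (two_ne_zero)]
    have h2 : (N ^ (1/p.toReal - 1/2))^2 = N ^ (2*a - 1) := by
      rw [← Real.rpow_natCast (N ^ _) 2, ← Real.rpow_mul hN.le]
      congr 1
      push_cast
      ring
    rw [h2, Real.rpow_sub hN, Real.rpow_one, div_le_iff₀ hN]
    exact key.trans_eq (mul_comm N (L^2))
  · -- p ≥ 2 case
    rw [abs_of_neg (by linarith : 1/p.toReal - 1/2 < (0:ℝ)), neg_sub]
    have key : N ≤ L^2 * N ^ (2*a) := by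
      have h1 : N * N ≤ N * (L^2 * N^(2*a)) := by
        calc N * N ≤ N * ∑ v : Fin k → Bool, ‖T (e v)‖^2 := mul_le_mul_of_nonneg_left helow hN.le
          _ = ∑ u : Fin k → Bool, ‖T (w u)‖^2 := hpar.symm
          _ ≤ N * (L*c)^2 := hhigh
          _ = N * (L^2 * N^(2*a)) := by rw [mul_pow, hc2]
      exact le_of_mul_le_mul_left h1 hN
    rw [← pow_le_pow_iff_left₀ (Real.rpow_nonneg hN.le _) hL0.le (two_ne_zero)]
    have h2 : (N ^ (1/2 - 1/p.toReal))^2 = N ^ (1 - 2*a) := by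
      rw [← Real.rpow_natCast (N ^ _) 2, ← Real.rpow_mul hN.le]
      congr 1
      push_cast
      ring
    rw [h2, Real.rpow_sub hN, Real.rpow_one, div_le_iff₀ (Real.rpow_pos_of_pos hN _)]
    exact key
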